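/- If probability measures μₙ on ℝ₊ with finite nonzero means converge to μ (with finite nonzero mean) in the Wasserstein-1 sense (convergence in distribution plus uniform integrability), then the size biasings μₙ* converge to μ* in distribution. -/

import Mathlib

open MeasureTheory Filter
open scoped NNReal ENNReal

/-- The size biasing `μ* (B) = (∫_B x dμ) / m` of a measure `μ` on `ℝ₊`. -/
noncomputable def sizeBias (μ : Measure ℝ) : Measure ℝ :=
  (ENNReal.ofReal (∫ x, x ∂μ))⁻¹ • μ.withDensity (fun x => ENNReal.ofReal x)

/-- Truncation `x ↦ min (max x 0) M` as a bounded continuous function. -/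
noncomputable def trunc (M : ℝ) : BoundedContinuousFunction ℝ ℝ :=
  BoundedContinuousFunction.ofNormedAddCommGroup (fun x => min (max x 0) M)
    (by continuity) |M| (by
      intro x
      show ‖min (max x 0) M‖ ≤ |M|
      rw [Real.norm_eq_abs, abs_le]
      constructor
      · rcases le_or_gt 0 M with h | h
        · exact le_trans (neg_nonpos.2 (abs_nonneg M))
            (le_min (le_max_right x 0) h)
        · rw [min_eq_right (le_trans h.le (le_max_right x 0))]
          exact neg_abs_le M
      · exact le_trans (min_le_right _ _) (le_abs_self M))

lemma trunc_apply (M x : ℝ) : trunc M x = min (max x 0) M := rfl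

lemma ae_nonneg_of_null (μ : Measure ℝ) (hpos : μ {x | x < 0} = 0) :
    ∀ᵐ x ∂μ, 0 ≤ x := by
  rw [ae_iff]
  simpa [not_le] using hpos

/-- Integral against the size biasing. -/
lemma integral_sizeBias (μ : Measure ℝ) (hpos : μ {x | x < 0} = 0)
    (hm : 0 ≤ ∫ x, x ∂μ) (f : ℝ → ℝ) :
    ∫ x, f x ∂(sizeBias μ) = (∫ x, x * f x ∂μ) / (∫ x, x ∂μ) := by
  have hd : (fun x : ℝ => ENNReal.ofReal x)
      = fun x : ℝ => ((Real.toNNReal x : ℝ≥0) : ℝ≥0∞) := rfl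
  rw [sizeBias, integral_smul_measure, hd,
    integral_withDensity_eq_integral_smul measurable_real_toNNReal f]
  have h2 : ∫ x, Real.toNNReal x • f x ∂μ = ∫ x, x * f x ∂μ := by
    refine integral_congr_ae ?_
    filter_upwards [ae_nonneg_of_null μ hpos] with x hx
    simp [NNReal.smul_def, Real.coe_toNNReal x hx]
  rw [h2, ENNReal.toReal_inv, ENNReal.toReal_ofReal hm, smul_eq_mul,
    inv_mul_eq_div]

lemma tail_mono (μ : Measure ℝ) (hpos : μ {x | x < 0} = 0)
    (hint : Integrable (fun x => x) μ) {a b : ℝ} (hab : a ≤ b) :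
    ∫ x in {x | b ≤ x}, x ∂μ ≤ ∫ x in {x | a ≤ x}, x ∂μ := by
  refine setIntegral_mono_set hint.integrableOn ?_ ?_
  · exact ae_restrict_of_ae (ae_nonneg_of_null μ hpos)
  · exact HasSubset.Subset.eventuallyLE (fun x hx => le_trans hab hx)

lemma tail_nonneg (μ : Measure ℝ) {M : ℝ} (hM : 0 ≤ M) :
    0 ≤ ∫ x in {x | M ≤ x}, x ∂μ :=
  setIntegral_nonneg (measurableSet_le measurable_const measurable_id)
    (fun x hx => le_trans hM hx)

lemma approx_bound (μ : Measure ℝ) [IsProbabilityMeasure μ]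
    (hpos : μ {x | x < 0} = 0) (hint : Integrable (fun x => x) μ)
    (f : BoundedContinuousFunction ℝ ℝ) {M : ℝ} (hM : 0 ≤ M) :
    |∫ x, x * f x ∂μ - ∫ x, (trunc M * f) x ∂μ|
      ≤ ‖f‖ * ∫ x in {x | M ≤ x}, x ∂μ := by
  have hmeas : MeasurableSet {x : ℝ | M ≤ x} :=
    measurableSet_le measurable_const measurable_id
  have hInt1 : Integrable (fun x => x * f x) μ := by
    have h := hint.bdd_mul f.continuous.aestronglyMeasurable
      (c := ‖f‖) (Eventually.of_forall fun x => f.norm_coe_le_norm x)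
    simpa [mul_comm] using h
  have hInt2 : Integrable (fun x => (trunc M * f) x) μ :=
    (trunc M * f).integrable μ
  have hIntB : Integrable
      (fun x => ‖f‖ * Set.indicator {x : ℝ | M ≤ x} (fun y => y) x) μ :=
    (hint.indicator hmeas).const_mul _
  rw [← integral_sub hInt1 hInt2]
  calc |∫ x, (x * f x - (trunc M * f) x) ∂μ|
      ≤ ∫ x, |x * f x - (trunc M * f) x| ∂μ := by
        simpa [Real.norm_eq_abs] using
          norm_integral_le_integral_norm (μ := μ)
            (fun x => x * f x - (trunc M * f) x)
    _ ≤ ∫ x, ‖f‖ * Set.indicator {x : ℝ | M ≤ x} (fun y => y) x ∂μ := by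
        refine integral_mono_ae (hInt1.sub hInt2).abs hIntB ?_
        filter_upwards [ae_nonneg_of_null μ hpos] with x hx
        have hfx : |f x| ≤ ‖f‖ := by
          simpa [Real.norm_eq_abs] using f.norm_coe_le_norm x
        simp only [BoundedContinuousFunction.coe_mul, Pi.mul_apply,
          trunc_apply, max_eq_left hx]
        rcases le_or_gt M x with h | h
        · rw [Set.indicator_of_mem (show x ∈ {x : ℝ | M ≤ x} from h),
            min_eq_right h]
          rw [← sub_mul, abs_mul]
          calc |x - M| * |f x| ≤ x * ‖f‖ := by
                refine mul_le_mul ?_ hfx (abs_nonneg _) hx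
                rw [abs_of_nonneg (sub_nonneg.2 h)]
                exact sub_le_self x hM
            _ = ‖f‖ * x := mul_comm _ _
        · rw [Set.indicator_of_notMem (by simpa using h), min_eq_left h.le]
          simp
    _ = ‖f‖ * ∫ x in {x | M ≤ x}, x ∂μ := by
        rw [integral_const_mul, integral_indicator hmeas]

lemma tail_tendsto (μ : Measure ℝ) (hint : Integrable (fun x => x) μ) :
    Tendsto (fun k : ℕ => ∫ x in {x | (k : ℝ) ≤ x}, x ∂μ) atTop (nhds 0) := by
  have hmeas : ∀ k : ℕ, MeasurableSet {x : ℝ | (k : ℝ) ≤ x} := fun k =>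
    measurableSet_le measurable_const measurable_id
  have hrw : ∀ k : ℕ, ∫ x in {x | (k : ℝ) ≤ x}, x ∂μ
      = ∫ x, Set.indicator {x : ℝ | (k : ℝ) ≤ x} (fun y => y) x ∂μ := fun k =>
    (integral_indicator (hmeas k)).symm
  simp_rw [hrw]
  have h0 : (0 : ℝ) = ∫ _x, (0 : ℝ) ∂μ := by simp
  rw [h0]
  refine tendsto_integral_of_dominated_convergence (fun x => |x|)
    (fun k => (hint.1.indicator (hmeas k))) hint.abs ?_ ?_
  · intro k
    filter_upwards with x
    rw [Real.norm_eq_abs]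
    by_cases hx : x ∈ {x : ℝ | (k : ℝ) ≤ x}
    · rw [Set.indicator_of_mem hx]
    · rw [Set.indicator_of_notMem hx]
      simp [abs_nonneg]
  · filter_upwards with x
    obtain ⟨n, hn⟩ := exists_nat_gt x
    refine tendsto_const_nhds.congr' ?_
    filter_upwards [eventually_ge_atTop n] with k hk
    refine (Set.indicator_of_notMem ?_ _).symm
    simp only [Set.mem_setOf_eq, not_le]
    exact lt_of_lt_of_le hn (by exact_mod_cast hk)

lemma key_tendsto (μ : ℕ → Measure ℝ) (ν : Measure ℝ)
    [∀ n, IsProbabilityMeasure (μ n)] [IsProbabilityMeasure ν]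
    (hpos : ∀ n, μ n {x | x < 0} = 0) (hpos' : ν {x | x < 0} = 0)
    (hint : ∀ n, Integrable (fun x => x) (μ n)) (hint' : Integrable (fun x => x) ν)
    (hconv : ∀ f : BoundedContinuousFunction ℝ ℝ,
      Tendsto (fun n => ∫ x, f x ∂(μ n)) atTop (nhds (∫ x, f x ∂ν)))
    (hui : ∀ ε > (0 : ℝ), ∃ M : ℝ, ∀ n, ∫ x in {x | M ≤ x}, x ∂(μ n) < ε)
    (f : BoundedContinuousFunction ℝ ℝ) :
    Tendsto (fun n => ∫ x, x * f x ∂(μ n)) atTop (nhds (∫ x, x * f x ∂ν)) := by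
  rw [Metric.tendsto_atTop]
  intro ε hε
  set A := ‖f‖ + 1 with hA_def
  have hA : 0 < A := by positivity
  have hfA : ‖f‖ ≤ A := by simp [hA_def]
  have hδ : 0 < ε / (3 * A) := by positivity
  obtain ⟨M0, hM0⟩ := hui (ε / (3 * A)) hδ
  -- tail of ν small
  have htail := tail_tendsto ν hint'
  rw [Metric.tendsto_atTop] at htail
  obtain ⟨k, hk⟩ := htail (ε / (3 * A)) hδ
  set M := max (max M0 1) (k : ℝ) with hM_def
  have hM : (0 : ℝ) ≤ M := le_trans (by norm_num) (le_trans (le_max_right M0 1) (le_max_left _ _))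
  have hμtail : ∀ n, ∫ x in {x | M ≤ x}, x ∂(μ n) ≤ ε / (3 * A) := fun n =>
    le_trans (tail_mono (μ n) (hpos n) (hint n)
      (le_trans (le_max_left M0 1) (le_max_left _ _))) (hM0 n).le
  have hνtail : ∫ x in {x | M ≤ x}, x ∂ν ≤ ε / (3 * A) := by
    refine le_trans (tail_mono ν hpos' hint' (le_max_right _ _)) ?_
    have := hk k le_rfl
    rw [Real.dist_eq, sub_zero] at this
    exact le_trans (le_abs_self _) this.le
  have hconvM := hconv (trunc M * f)
  rw [Metric.tendsto_atTop] at hconvM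
  obtain ⟨N, hN⟩ := hconvM (ε / 3) (by positivity)
  refine ⟨N, fun n hn => ?_⟩
  have h1 : |∫ x, x * f x ∂(μ n) - ∫ x, (trunc M * f) x ∂(μ n)| ≤ ε / 3 := by
    refine le_trans (approx_bound (μ n) (hpos n) (hint n) f hM) ?_
    calc ‖f‖ * ∫ x in {x | M ≤ x}, x ∂(μ n)
        ≤ A * (ε / (3 * A)) :=
          mul_le_mul hfA (hμtail n) (tail_nonneg (μ n) hM) hA.le
      _ = ε / 3 := by field_simp
  have h3 : |∫ x, x * f x ∂ν - ∫ x, (trunc M * f) x ∂ν| ≤ ε / 3 := by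
    refine le_trans (approx_bound ν hpos' hint' f hM) ?_
    calc ‖f‖ * ∫ x in {x | M ≤ x}, x ∂ν
        ≤ A * (ε / (3 * A)) :=
          mul_le_mul hfA hνtail (tail_nonneg ν hM) hA.le
      _ = ε / 3 := by field_simp
  have h2 : |∫ x, (trunc M * f) x ∂(μ n) - ∫ x, (trunc M * f) x ∂ν| < ε / 3 := by
    simpa [Real.dist_eq] using hN n hn
  rw [Real.dist_eq]
  calc |∫ x, x * f x ∂(μ n) - ∫ x, x * f x ∂ν|
      ≤ |∫ x, x * f x ∂(μ n) - ∫ x, (trunc M * f) x ∂(μ n)|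
        + |∫ x, (trunc M * f) x ∂(μ n) - ∫ x, (trunc M * f) x ∂ν|
        + |∫ x, (trunc M * f) x ∂ν - ∫ x, x * f x ∂ν| := by
        have := abs_sub_le (∫ x, x * f x ∂(μ n)) (∫ x, (trunc M * f) x ∂(μ n))
          (∫ x, x * f x ∂ν)
        have h4 := abs_sub_le (∫ x, (trunc M * f) x ∂(μ n))
          (∫ x, (trunc M * f) x ∂ν) (∫ x, x * f x ∂ν)
        linarith
    _ < ε := by
        rw [abs_sub_comm] at h3
        linarith

/-- If probability measures `μₙ` on ℝ₊ with finite nonzero means converge to `μ`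
(with finite nonzero mean) in distribution and are uniformly integrable
(i.e. converge in the Wasserstein-1 sense), then the size biasings `μₙ*`
converge to `μ*` in distribution. -/
theorem sizeBias_tendsto (μ : ℕ → Measure ℝ) (ν : Measure ℝ)
    [∀ n, IsProbabilityMeasure (μ n)] [IsProbabilityMeasure ν]
    (hpos : ∀ n, μ n {x | x < 0} = 0) (hpos' : ν {x | x < 0} = 0)
    (hint : ∀ n, Integrable (fun x => x) (μ n)) (hint' : Integrable (fun x => x) ν)
    (hmean : ∀ n, 0 < ∫ x, x ∂(μ n)) (hmean' : 0 < ∫ x, x ∂ν)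
    (hconv : ∀ f : BoundedContinuousFunction ℝ ℝ,
      Tendsto (fun n => ∫ x, f x ∂(μ n)) atTop (nhds (∫ x, f x ∂ν)))
    (hui : ∀ ε > (0 : ℝ), ∃ M : ℝ, ∀ n, ∫ x in {x | M ≤ x}, x ∂(μ n) < ε) :
    ∀ f : BoundedContinuousFunction ℝ ℝ,
      Tendsto (fun n => ∫ x, f x ∂(sizeBias (μ n))) atTop
        (nhds (∫ x, f x ∂(sizeBias ν))) := by
  intro f
  have hrw : ∀ n, ∫ x, f x ∂(sizeBias (μ n))
      = (∫ x, x * f x ∂(μ n)) / (∫ x, x ∂(μ n)) := fun n =>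
    integral_sizeBias (μ n) (hpos n) (hmean n).le f
  have hrw' : ∫ x, f x ∂(sizeBias ν)
      = (∫ x, x * f x ∂ν) / (∫ x, x ∂ν) :=
    integral_sizeBias ν hpos' hmean'.le f
  simp_rw [hrw, hrw']
  have hnum := key_tendsto μ ν hpos hpos' hint hint' hconv hui f
  have hden := key_tendsto μ ν hpos hpos' hint hint' hconv hui
    (1 : BoundedContinuousFunction ℝ ℝ)
  simp only [BoundedContinuousFunction.coe_one, Pi.one_apply, mul_one] at hden
  exact hnum.div hden (ne_of_gt hmean')
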